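/- Let V : [r₁, r₂] → ℝ be a continuous, piecewise linear, non-decreasing function with r₁ < r₂ and V(r₁) > 0, and let C : [r₁, r₂] → ℝ be a nonnegative function with C(r) ≤ V'(r) wherever V is differentiable. Let ε = 4·(ln V(r₂) - ln V(r₁))/(r₂ - r₁). Then the set of radii r ∈ [r₁, r₂] with C(r) > ε·V(r) has Lebesgue measure at most (r₂ - r₁)/4. -/

import Mathlib

/-- `V` is piecewise linear on `[a,b]`: there is a finite subdivision
`a = p 0 < p 1 < ⋯ < p n = b` on each piece of which `V` is affine. -/
def IsPiecewiseLinearOn (V : ℝ → ℝ) (a b : ℝ) : Prop :=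
  ∃ n : ℕ, ∃ p : Fin (n + 1) → ℝ, StrictMono p ∧ p 0 = a ∧ p (Fin.last n) = b ∧
    ∀ i : Fin n, ∃ m c : ℝ, ∀ x ∈ Set.Icc (p i.castSucc) (p i.succ), V x = m * x + c

private lemma exists_piece : ∀ {n : ℕ} (p : Fin (n + 2) → ℝ), Monotone p → ∀ {r : ℝ},
    r ∈ Set.Icc (p 0) (p (Fin.last (n + 1))) →
    ∃ i : Fin (n + 1), r ∈ Set.Icc (p i.castSucc) (p i.succ) := by
  intro n
  induction n with
  | zero =>
    intro p hp r hr
    exact ⟨0, by simpa using hr⟩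
  | succ n ih =>
    intro p hp r hr
    by_cases hc : r ≤ p (Fin.last (n + 1)).castSucc
    · obtain ⟨i, hi⟩ := ih (p ∘ Fin.castSucc) (hp.comp Fin.strictMono_castSucc.monotone)
        ⟨by simpa using hr.1, by simpa using hc⟩
      refine ⟨i.castSucc, ?_⟩
      rw [Fin.succ_castSucc]
      simpa [Function.comp] using hi
    · exact ⟨Fin.last (n + 1), ⟨(not_le.mp hc).le, by
        rw [Fin.succ_last]; exact hr.2⟩⟩

theorem random_cut_gvy (r₁ r₂ : ℝ) (h : r₁ < r₂) (V C : ℝ → ℝ)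
    (hVc : ContinuousOn V (Set.Icc r₁ r₂))
    (hVpl : IsPiecewiseLinearOn V r₁ r₂)
    (hVmono : MonotoneOn V (Set.Icc r₁ r₂))
    (hVpos : 0 < V r₁)
    (hC : ∀ r ∈ Set.Icc r₁ r₂, 0 ≤ C r)
    (hCV : ∀ r ∈ Set.Ioo r₁ r₂, DifferentiableAt ℝ V r → C r ≤ deriv V r)
    (ε : ℝ) (hε : ε = 4 * (Real.log (V r₂) - Real.log (V r₁)) / (r₂ - r₁)) :
    MeasureTheory.volume {r | r ∈ Set.Icc r₁ r₂ ∧ C r > ε * V r} ≤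
      ENNReal.ofReal ((r₂ - r₁) / 4) := by
  obtain ⟨n, p, hpmono, hp0, hplast, haff⟩ := hVpl
  rcases n with _ | n
  · exfalso
    have : r₁ = r₂ := by rw [← hp0, ← hplast]; rfl
    linarith
  have hr12 : r₁ ≤ r₂ := h.le
  have hmem1 : r₁ ∈ Set.Icc r₁ r₂ := Set.left_mem_Icc.mpr hr12
  have hmem2 : r₂ ∈ Set.Icc r₁ r₂ := Set.right_mem_Icc.mpr hr12
  have hVmem : ∀ r ∈ Set.Icc r₁ r₂, 0 < V r := fun r hr =>
    lt_of_lt_of_le hVpos (hVmono hmem1 hr hr.1)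
  set G : ℝ → ℝ := fun r => Real.log (V r) with hGdef
  have hG : MonotoneOn G (Set.Icc r₁ r₂) := fun x hx y hy hxy =>
    Real.log_le_log (hVmem x hx) (hVmono hx hy hxy)
  have hpIcc : ∀ i : Fin (n + 2), p i ∈ Set.Icc r₁ r₂ := fun i =>
    ⟨hp0 ▸ hpmono.monotone (Fin.zero_le i), hplast ▸ hpmono.monotone (Fin.le_last i)⟩
  have hplt : ∀ i : Fin (n + 1), p i.castSucc < p i.succ := fun i =>
    hpmono Fin.castSucc_lt_succ
  have hpieceIcc : ∀ i : Fin (n + 1), Set.Icc (p i.castSucc) (p i.succ) ⊆ Set.Icc r₁ r₂ :=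
    fun i => Set.Icc_subset_Icc (hpIcc _).1 (hpIcc _).2
  have hεnn : 0 ≤ ε := by
    rw [hε]
    have hl : Real.log (V r₁) ≤ Real.log (V r₂) :=
      Real.log_le_log hVpos (hVmono hmem1 hmem2 hr12)
    have hd := sub_pos.mpr h
    have h4 : (0:ℝ) ≤ 4 * (Real.log (V r₂) - Real.log (V r₁)) := by linarith
    exact div_nonneg h4 hd.le
  choose m c hmc using haff
  have hderiv : ∀ i : Fin (n + 1), ∀ r ∈ Set.Ioo (p i.castSucc) (p i.succ),
      HasDerivAt V (m i) r := by
    intro i r hr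
    have haff' : HasDerivAt (fun x => m i * x + c i) (m i) r := by
      simpa using ((hasDerivAt_id r).const_mul (m i)).add_const (c i)
    exact haff'.congr_of_eventuallyEq (Filter.eventuallyEq_of_mem
      (Ioo_mem_nhds hr.1 hr.2) (fun x hx => hmc i x (Set.Ioo_subset_Icc_self hx)))
  have hIooIoo : ∀ i : Fin (n + 1), Set.Ioo (p i.castSucc) (p i.succ) ⊆ Set.Ioo r₁ r₂ := by
    intro i r hr
    exact ⟨lt_of_le_of_lt (hp0 ▸ hpmono.monotone (Fin.zero_le _)) hr.1,
      lt_of_lt_of_le hr.2 (hplast ▸ hpmono.monotone (Fin.le_last _))⟩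
  rcases hεnn.eq_or_lt with hε0 | hεpos
  · -- ε = 0 : V is constant, bad set is contained in the finite set of breakpoints
    have hL : Real.log (V r₂) = Real.log (V r₁) := by
      rw [← hε0] at hε
      have hne : r₂ - r₁ ≠ 0 := sub_ne_zero.mpr h.ne'
      have h4 := (div_eq_zero_iff.mp hε.symm).resolve_right hne
      linarith
    have hVeq : V r₂ = V r₁ := by
      have := congrArg Real.exp hL
      rwa [Real.exp_log (hVmem _ hmem2), Real.exp_log hVpos] at this
    have hconst : ∀ x ∈ Set.Icc r₁ r₂, V x = V r₁ :=
      fun x hx => le_antisymm (hVeq ▸ hVmono hx hmem2 hx.2) (hVmono hmem1 hx hx.1)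
    have hm0 : ∀ i : Fin (n + 1), m i = 0 := by
      intro i
      have h1 := hmc i (p i.castSucc) (Set.left_mem_Icc.mpr (hplt i).le)
      have h2 := hmc i (p i.succ) (Set.right_mem_Icc.mpr (hplt i).le)
      have e1 := hconst _ (hpIcc i.castSucc)
      have e2 := hconst _ (hpIcc i.succ)
      have hne : p i.succ - p i.castSucc ≠ 0 := sub_ne_zero.mpr (hplt i).ne'
      have : m i * (p i.succ - p i.castSucc) = 0 := by nlinarith
      exact (mul_eq_zero.mp this).resolve_right hne
    have hsub : {r | r ∈ Set.Icc r₁ r₂ ∧ C r > ε * V r} ⊆ Set.range p := by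
      rintro r ⟨hrIcc, hrC⟩
      by_contra hrp
      obtain ⟨i, hi⟩ := exists_piece p hpmono.monotone (by rw [hp0, hplast]; exact hrIcc)
      have h1 : p i.castSucc < r := by
        rcases eq_or_lt_of_le hi.1 with he | h1
        · exact absurd ⟨i.castSucc, he⟩ hrp
        · exact h1
      have h2 : r < p i.succ := by
        rcases eq_or_lt_of_le hi.2 with he | h2
        · exact absurd ⟨i.succ, he.symm⟩ hrp
        · exact h2
      have hd := hderiv i r ⟨h1, h2⟩
      have hle := hCV r (hIooIoo i ⟨h1, h2⟩) hd.differentiableAt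
      rw [hd.deriv, hm0 i] at hle
      rw [← hε0, zero_mul] at hrC
      linarith
    calc MeasureTheory.volume {r | r ∈ Set.Icc r₁ r₂ ∧ C r > ε * V r}
        ≤ MeasureTheory.volume (Set.range p) := MeasureTheory.measure_mono hsub
      _ = 0 := (Set.finite_range p).measure_zero _
      _ ≤ ENNReal.ofReal ((r₂ - r₁) / 4) := zero_le
  · -- ε > 0
    set s : Fin (n + 1) → ℝ := fun i =>
      if 0 < m i then max (p i.castSucc) (min (p i.succ) ((m i / ε - c i) / m i))
      else p i.castSucc with hsdef
    have hs_mem : ∀ i, s i ∈ Set.Icc (p i.castSucc) (p i.succ) := by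
      intro i
      by_cases hmi : 0 < m i
      · simp only [hsdef, if_pos hmi]
        exact ⟨le_max_left _ _, max_le (hplt i).le (min_le_left _ _)⟩
      · simp only [hsdef, if_neg hmi]
        exact ⟨le_refl _, (hplt i).le⟩
    have hBsub : ∀ i : Fin (n + 1),
        {r | r ∈ Set.Icc r₁ r₂ ∧ C r > ε * V r} ∩ Set.Ioo (p i.castSucc) (p i.succ)
          ⊆ Set.Ioo (p i.castSucc) (s i) := by
      rintro i r ⟨⟨hrIcc, hrC⟩, hro⟩
      have hd := hderiv i r hro
      have hCle : C r ≤ m i := by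
        have := hCV r (hIooIoo i hro) hd.differentiableAt
        rwa [hd.deriv] at this
      have hVr : 0 < V r := hVmem r hrIcc
      have hεV : 0 < ε * V r := mul_pos hεpos hVr
      have hm : 0 < m i := lt_trans hεV (lt_of_lt_of_le hrC hCle)
      have hVaff : V r = m i * r + c i := hmc i r (Set.Ioo_subset_Icc_self hro)
      have hrt : r < (m i / ε - c i) / m i := by
        rw [lt_div_iff₀ hm]
        have h2 : m i * r + c i < m i / ε := by
          rw [lt_div_iff₀ hεpos]
          have : ε * (m i * r + c i) < m i := by rw [← hVaff]; linarith
          linarith [this, mul_comm (m i * r + c i) ε]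
        linarith [mul_comm r (m i)]
      refine ⟨hro.1, ?_⟩
      calc r < min (p i.succ) ((m i / ε - c i) / m i) := lt_min hro.2 hrt
        _ ≤ s i := by
            simp only [hsdef, if_pos hm]
            exact le_max_right _ _
    have hlen : ∀ i : Fin (n + 1), ε * (s i - p i.castSucc) ≤ G (p i.succ) - G (p i.castSucc) := by
      intro i
      have hGpiece : G (p i.castSucc) ≤ G (p i.succ) :=
        hG (hpIcc _) (hpIcc _) (hplt i).le
      by_cases hmi : 0 < m i
      · by_cases hsle : s i ≤ p i.castSucc
        · have hse : s i = p i.castSucc := le_antisymm hsle (hs_mem i).1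
          rw [hse]
          simpa using hGpiece
        · push_neg at hsle
          have hsi : s i = min (p i.succ) ((m i / ε - c i) / m i) := by
            simp only [hsdef, if_pos hmi] at hsle ⊢
            rcases max_choice (p i.castSucc) (min (p i.succ) ((m i / ε - c i) / m i)) with hc1 | hc1
            · rw [hc1] at hsle; exact absurd hsle (lt_irrefl _)
            · exact hc1
          have hst : s i ≤ (m i / ε - c i) / m i := hsi ▸ min_le_right _ _
          have hpos : ∀ x ∈ Set.Icc (p i.castSucc) (s i), 0 < m i * x + c i := by
            intro x hx
            have hx' : x ∈ Set.Icc (p i.castSucc) (p i.succ) := ⟨hx.1, le_trans hx.2 (hs_mem i).2⟩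
            rw [← hmc i x hx']
            exact hVmem x (hpieceIcc i hx')
          have hmonoH : MonotoneOn (fun x => Real.log (m i * x + c i) - ε * x)
              (Set.Icc (p i.castSucc) (s i)) := by
            have hD : ∀ x ∈ Set.Ioo (p i.castSucc) (s i),
                HasDerivAt (fun x => Real.log (m i * x + c i) - ε * x)
                  (m i / (m i * x + c i) - ε) x := by
              intro x hx
              have hx0 : 0 < m i * x + c i := hpos x (Set.Ioo_subset_Icc_self hx)
              have h1 : HasDerivAt (fun x => m i * x + c i) (m i) x := by
                simpa using ((hasDerivAt_id x).const_mul (m i)).add_const (c i)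
              have h2 := (Real.hasDerivAt_log hx0.ne').comp x h1
              have h3 : HasDerivAt (fun x => ε * x) ε x := by
                simpa using (hasDerivAt_id x).const_mul ε
              have := h2.sub h3
              exact this.congr_deriv (by ring)
            apply monotoneOn_of_deriv_nonneg (convex_Icc _ _)
            · exact ContinuousOn.sub
                (ContinuousOn.log (by fun_prop) (fun x hx => (hpos x hx).ne'))
                (by fun_prop)
            · intro x hx
              rw [interior_Icc] at hx
              exact (hD x hx).differentiableAt.differentiableWithinAt
            · intro x hx
              rw [interior_Icc] at hx
              rw [(hD x hx).deriv]
              have hx0 : 0 < m i * x + c i := hpos x (Set.Ioo_subset_Icc_self hx)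
              have hle1 : m i * x + c i ≤ m i / ε := by
                have hxt : x ≤ (m i / ε - c i) / m i := le_trans (Set.Ioo_subset_Icc_self hx).2 hst
                rw [le_div_iff₀ hmi] at hxt
                linarith [mul_comm x (m i)]
              have hεle : ε ≤ m i / (m i * x + c i) := by
                rw [le_div_iff₀ hx0]
                calc ε * (m i * x + c i) ≤ ε * (m i / ε) := by nlinarith
                  _ = m i := by field_simp
              linarith
          have hH := hmonoH ⟨le_refl _, hsle.le⟩ ⟨(hs_mem i).1, le_refl _⟩ hsle.le
          have e1 : m i * p i.castSucc + c i = V (p i.castSucc) :=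
            (hmc i _ (Set.left_mem_Icc.mpr (hplt i).le)).symm
          have e2 : m i * s i + c i = V (s i) := (hmc i _ (hs_mem i)).symm
          have hH' : Real.log (m i * p i.castSucc + c i) - ε * p i.castSucc
              ≤ Real.log (m i * s i + c i) - ε * s i := hH
          rw [e1, e2] at hH'
          have hGs : G (s i) ≤ G (p i.succ) :=
            hG (hpieceIcc i (hs_mem i)) (hpIcc _) (hs_mem i).2
          simp only [hGdef] at hGs hGpiece ⊢
          linarith [hH']
      · simp only [hsdef, if_neg hmi]
        simpa using hGpiece
    -- telescoping sum
    have htel : ∑ i : Fin (n + 1), (G (p i.succ) - G (p i.castSucc)) = G r₂ - G r₁ := by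
      set g : ℕ → ℝ := fun j => G (p ⟨min j (n + 1), Nat.lt_succ_of_le (min_le_right _ _)⟩)
        with hgdef
      have h1 := Finset.sum_range_sub g (n + 1)
      have h2 := Fin.sum_univ_eq_sum_range (fun j => g (j + 1) - g j) (n + 1)
      have h3 : ∀ i : Fin (n + 1), g (i.val + 1) - g i.val = G (p i.succ) - G (p i.castSucc) := by
        intro i
        have e1 : (⟨min (i.val + 1) (n + 1), Nat.lt_succ_of_le (min_le_right _ _)⟩ : Fin (n + 2))
            = i.succ := by
          apply Fin.ext
          simp [Nat.min_eq_left (Nat.succ_le_of_lt i.isLt)]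
        have e2 : (⟨min i.val (n + 1), Nat.lt_succ_of_le (min_le_right _ _)⟩ : Fin (n + 2))
            = i.castSucc := by
          apply Fin.ext
          simp [Nat.min_eq_left (le_of_lt (Nat.lt_succ_of_lt i.isLt))]
        simp only [hgdef, e1, e2]
      have hgn : g (n + 1) = G r₂ := by
        have : (⟨min (n + 1) (n + 1), Nat.lt_succ_of_le (min_le_right _ _)⟩ : Fin (n + 2))
            = Fin.last (n + 1) := by apply Fin.ext; simp [Fin.last]
        simp only [hgdef, this, hplast]
      have hg0 : g 0 = G r₁ := by
        have : (⟨min 0 (n + 1), Nat.lt_succ_of_le (min_le_right _ _)⟩ : Fin (n + 2))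
            = 0 := by apply Fin.ext; simp
        simp only [hgdef, this, hp0]
      calc ∑ i : Fin (n + 1), (G (p i.succ) - G (p i.castSucc))
          = ∑ i : Fin (n + 1), (g (i.val + 1) - g i.val) := by
            exact Finset.sum_congr rfl (fun i _ => (h3 i).symm)
        _ = ∑ j ∈ Finset.range (n + 1), (g (j + 1) - g j) := h2
        _ = g (n + 1) - g 0 := h1
        _ = G r₂ - G r₁ := by rw [hgn, hg0]
    have hsum1 : ε * ∑ i : Fin (n + 1), (s i - p i.castSucc) ≤ ε * ((r₂ - r₁) / 4) := by
      rw [Finset.mul_sum]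
      have h1 : ∑ i : Fin (n + 1), ε * (s i - p i.castSucc)
          ≤ ∑ i : Fin (n + 1), (G (p i.succ) - G (p i.castSucc)) :=
        Finset.sum_le_sum (fun i _ => hlen i)
      have h2 : G r₂ - G r₁ = ε * ((r₂ - r₁) / 4) := by
        have hne : r₂ - r₁ ≠ 0 := sub_ne_zero.mpr h.ne'
        simp only [hGdef]
        rw [hε]
        field_simp
      rw [← h2]
      exact h1.trans_eq htel
    have hreal : ∑ i : Fin (n + 1), (s i - p i.castSucc) ≤ (r₂ - r₁) / 4 :=
      le_of_mul_le_mul_left hsum1 hεpos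
    have hcover : {r | r ∈ Set.Icc r₁ r₂ ∧ C r > ε * V r} ⊆
        (⋃ i : Fin (n + 1), Set.Ioo (p i.castSucc) (s i)) ∪ Set.range p := by
      intro r hr
      obtain ⟨i, hi⟩ := exists_piece p hpmono.monotone (by rw [hp0, hplast]; exact hr.1)
      rcases eq_or_lt_of_le hi.1 with he | h1
      · exact Or.inr ⟨i.castSucc, he⟩
      rcases eq_or_lt_of_le hi.2 with he | h2
      · exact Or.inr ⟨i.succ, he.symm⟩
      · exact Or.inl (Set.mem_iUnion.mpr ⟨i, hBsub i ⟨hr, ⟨h1, h2⟩⟩⟩)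
    calc MeasureTheory.volume {r | r ∈ Set.Icc r₁ r₂ ∧ C r > ε * V r}
        ≤ MeasureTheory.volume ((⋃ i : Fin (n + 1), Set.Ioo (p i.castSucc) (s i)) ∪ Set.range p) :=
          MeasureTheory.measure_mono hcover
      _ ≤ MeasureTheory.volume (⋃ i : Fin (n + 1), Set.Ioo (p i.castSucc) (s i))
            + MeasureTheory.volume (Set.range p) := MeasureTheory.measure_union_le _ _
      _ = MeasureTheory.volume (⋃ i : Fin (n + 1), Set.Ioo (p i.castSucc) (s i)) := by
          rw [(Set.finite_range p).measure_zero, add_zero]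
      _ ≤ ∑ i : Fin (n + 1), MeasureTheory.volume (Set.Ioo (p i.castSucc) (s i)) :=
          MeasureTheory.measure_iUnion_fintype_le _ _
      _ = ∑ i : Fin (n + 1), ENNReal.ofReal (s i - p i.castSucc) := by
          simp [Real.volume_Ioo]
      _ = ENNReal.ofReal (∑ i : Fin (n + 1), (s i - p i.castSucc)) :=
          (ENNReal.ofReal_sum_of_nonneg (fun i _ => sub_nonneg.mpr (hs_mem i).1)).symm
      _ ≤ ENNReal.ofReal ((r₂ - r₁) / 4) := ENNReal.ofReal_le_ofReal hreal
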